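/- Let d ≥ 1, β₁ ∈ [0,1), ε > 0, η > 0, and let (x_t), (m_t), (v_t), (g_t) be sequences in ℝ^d with v_t having nonnegative coordinates for all t ≥ 0, m₀ = 0, x₀ = x₁, and for all t ≥ 1: m_t = β₁·m_{t−1} + (1−β₁)·g_t and x_{t+1} = x_t − η·(√v_t + ε)^{−1} ⊙ m_t (all operations element-wise). Define z_t = x_t + (β₁/(1−β₁))·(x_t − x_{t−1}). Then for every t ≥ 1: z_{t+1} = z_t + (η·β₁/(1−β₁))·((√v_{t−1} + ε)^{−1} − (√v_t + ε)^{−1}) ⊙ m_{t−1} − η·(√v_t + ε)^{−1} ⊙ g_t. (Auxiliary-sequence update identity for Adam.) -/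
import Mathlib

/-- **Auxiliary-sequence update identity for Adam.**
Let `d ≥ 1`, `β₁ ∈ [0,1)`, `ε > 0`, `η > 0` and let `(x t)`, `(m t)`, `(v t)`, `(g t)` be
sequences in `ℝ^d` with `v t` having nonnegative coordinates, `m 0 = 0`, `x 0 = x 1`, and for
`t ≥ 1`: `m t = β₁ • m (t-1) + (1-β₁) • g t` and
`x (t+1) = x t − η • (√(v t) + ε)⁻¹ ⊙ m t` (element-wise).  With
`z t = x t + (β₁/(1-β₁)) • (x t − x (t-1))`, for every `t ≥ 1` and coordinate `j`:
`z (t+1) j = z t j + (η β₁/(1-β₁)) ((√(v (t-1) j)+ε)⁻¹ − (√(v t j)+ε)⁻¹) m (t-1) j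
  − η (√(v t j)+ε)⁻¹ g t j`. -/
theorem adam_auxiliary_sequence_update
    {d : ℕ} (hd : 1 ≤ d) (β₁ ε η : ℝ) (hβ₁0 : 0 ≤ β₁) (hβ₁1 : β₁ < 1) (hε : 0 < ε) (hη : 0 < η)
    (x m v g : ℕ → EuclideanSpace ℝ (Fin d))
    (hvpos : ∀ t j, 0 ≤ v t j)
    (hm0 : m 0 = 0) (hx0 : x 0 = x 1)
    (hm : ∀ t, 1 ≤ t → m t = β₁ • m (t - 1) + (1 - β₁) • g t)
    (hx : ∀ t, 1 ≤ t → ∀ j, x (t + 1) j = x t j - η * (Real.sqrt (v t j) + ε)⁻¹ * m t j)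
    (z : ℕ → EuclideanSpace ℝ (Fin d))
    (hz : ∀ t, z t = x t + (β₁ / (1 - β₁)) • (x t - x (t - 1))) :
    ∀ t, 1 ≤ t → ∀ j : Fin d,
      z (t + 1) j = z t j
        + (η * β₁ / (1 - β₁)) *
            (((Real.sqrt (v (t - 1) j) + ε)⁻¹ - (Real.sqrt (v t j) + ε)⁻¹) * m (t - 1) j)
        - η * (Real.sqrt (v t j) + ε)⁻¹ * g t j := by
  intro t ht j
  have hb : (1 : ℝ) - β₁ ≠ 0 := by linarith
  have hdiff : x t j - x (t - 1) j
      = -(η * (Real.sqrt (v (t - 1) j) + ε)⁻¹ * m (t - 1) j) := by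
    rcases eq_or_lt_of_le ht with h1 | h2
    · have h1' : t = 1 := h1.symm
      subst h1'
      simp [← hx0, hm0]
    · have h2' : 1 ≤ t - 1 := by omega
      have := hx (t - 1) h2' j
      rw [Nat.sub_add_cancel ht] at this
      rw [this]; ring
  have hmt := hm t ht
  have hmtj : m t j = β₁ * m (t - 1) j + (1 - β₁) * g t j := by
    rw [hmt]; simp
  have hxt := hx t ht j
  have hzt1 := hz (t + 1)
  have hzt := hz t
  have e1 : z (t + 1) j = x (t + 1) j + (β₁ / (1 - β₁)) * (x (t + 1) j - x t j) := by
    rw [hzt1]; simp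
  have e2 : z t j = x t j + (β₁ / (1 - β₁)) * (x t j - x (t - 1) j) := by
    rw [hzt]; simp
  rw [e1, e2, hdiff, hxt, hmtj]
  field_simp
  ring
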